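/- Let E be a compact subset of ℝ² that is not purely unrectifiable. Then there exist r > 0, M > 0 and δ > 0 such that R_E(ε, r, M) ≥ δ for all ε > 0, where R_E is the rectifiability constant. -/

import Mathlib

open MeasureTheory
open scoped ENNReal NNReal

/-- The dot product on ℝ². -/
def dot (x y : ℝ × ℝ) : ℝ := x.1 * y.1 + x.2 * y.2

/-- The rectifiability constant `R_E(ε, r, M)` of a set `E ⊆ ℝ²`: the supremum, over
orthonormal pairs ω₁, ω₂, over `M`-Lipschitz functions `F : ℝ → ℝ` and over intervals
`J = [a,b]` of length at least `r`, of
`m({x ∈ J : x·ω₁ + (F x + y)·ω₂ ∈ E for some |y| ≤ ε}) / m(J)`. -/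
noncomputable def rectConst (E : Set (ℝ × ℝ)) (ε r M : ℝ) : ℝ :=
  sSup {u : ℝ | ∃ (ω₁ ω₂ : ℝ × ℝ) (F : ℝ → ℝ) (a b : ℝ),
    dot ω₁ ω₁ = 1 ∧ dot ω₂ ω₂ = 1 ∧ dot ω₁ ω₂ = 0 ∧
    LipschitzWith (Real.toNNReal M) F ∧ r ≤ b - a ∧
    u = (volume {x : ℝ | x ∈ Set.Icc a b ∧
          ∃ y : ℝ, |y| ≤ ε ∧ x • ω₁ + (F x + y) • ω₂ ∈ E}).toReal / (b - a)}

/-- If a compact `E ⊆ ℝ²` is not purely unrectifiable then its rectifiability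
constants are bounded below uniformly in ε for suitable `r, M`. -/
theorem stmt5 (E : Set (ℝ × ℝ)) (hE : IsCompact E)
    (hnot : ∃ (ω₁ ω₂ : ℝ × ℝ) (F : ℝ → ℝ) (M : ℝ≥0),
      dot ω₁ ω₁ = 1 ∧ dot ω₂ ω₂ = 1 ∧ dot ω₁ ω₂ = 0 ∧ LipschitzWith M F ∧
      0 < volume {x : ℝ | x • ω₁ + F x • ω₂ ∈ E}) :
    ∃ r > (0 : ℝ), ∃ M > (0 : ℝ), ∃ δ > (0 : ℝ),
      ∀ ε > (0 : ℝ), δ ≤ rectConst E ε r M := by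
  obtain ⟨ω₁, ω₂, F, M₀, h11, h22, h12, hF, hA⟩ := hnot
  obtain ⟨C, hC⟩ := hE.isBounded.subset_closedBall (0 : ℝ × ℝ)
  set K : ℝ := 2 * max C 0 + 1 with hKdef
  have hKpos : (0:ℝ) < K := by positivity
  set A : Set ℝ := {x : ℝ | x • ω₁ + F x • ω₂ ∈ E} with hAdef
  unfold dot at h11 h22 h12
  have hAsub : A ⊆ Set.Icc (-K) K := by
    intro x hx
    set p : ℝ × ℝ := x • ω₁ + F x • ω₂ with hpdef
    have hnorm : ‖p‖ ≤ C := by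
      have := hC hx
      simpa [Metric.mem_closedBall, dist_eq_norm] using this
    have h1 : |p.1| ≤ max C 0 := le_trans (by simpa using norm_fst_le p)
      (le_trans hnorm (le_max_left _ _))
    have h2 : |p.2| ≤ max C 0 := le_trans (by simpa using norm_snd_le p)
      (le_trans hnorm (le_max_left _ _))
    have hp1 : p.1 = x * ω₁.1 + F x * ω₂.1 := rfl
    have hp2 : p.2 = x * ω₁.2 + F x * ω₂.2 := rfl
    have hxval : x = p.1 * ω₁.1 + p.2 * ω₁.2 := by
      rw [hp1, hp2]; linear_combination (-x) * h11 - F x * h12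
    have ha1 := abs_le.mp h1
    have ha2 := abs_le.mp h2
    have hw1 : ω₁.1 ^ 2 ≤ 1 := by nlinarith [sq_nonneg ω₁.2]
    have hw2 : ω₁.2 ^ 2 ≤ 1 := by nlinarith [sq_nonneg ω₁.1]
    have hb1 : |ω₁.1| ≤ 1 := (sq_le_one_iff_abs_le_one _).mp hw1
    have hb2 : |ω₁.2| ≤ 1 := (sq_le_one_iff_abs_le_one _).mp hw2
    have hxabs : |x| ≤ 2 * max C 0 := by
      rw [hxval]
      calc |p.1 * ω₁.1 + p.2 * ω₁.2| ≤ |p.1 * ω₁.1| + |p.2 * ω₁.2| := abs_add_le _ _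
        _ = |p.1| * |ω₁.1| + |p.2| * |ω₁.2| := by rw [abs_mul, abs_mul]
        _ ≤ max C 0 * 1 + max C 0 * 1 := add_le_add
            (mul_le_mul h1 hb1 (abs_nonneg _) (le_max_right C 0))
            (mul_le_mul h2 hb2 (abs_nonneg _) (le_max_right C 0))
        _ = 2 * max C 0 := by ring
    have := abs_le.mp hxabs
    constructor
    · rw [hKdef]; linarith [this.1]
    · rw [hKdef]; linarith [this.2]
  have hIccvol : volume (Set.Icc (-K) K) = ENNReal.ofReal (2 * K) := by
    rw [Real.volume_Icc]; ring_nf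
  have hAfin : volume A ≠ ⊤ := by
    refine ne_top_of_le_ne_top ?_ (measure_mono hAsub)
    rw [hIccvol]; exact ENNReal.ofReal_ne_top
  have hδpos : 0 < (volume A).toReal / (2 * K) :=
    div_pos (ENNReal.toReal_pos hA.ne' hAfin) (by positivity)
  refine ⟨2 * K, by positivity, (M₀ : ℝ) + 1, by positivity,
    (volume A).toReal / (2 * K), hδpos, ?_⟩
  intro ε hε
  set S : Set ℝ := {x : ℝ | x ∈ Set.Icc (-K) K ∧
      ∃ y : ℝ, |y| ≤ ε ∧ x • ω₁ + (F x + y) • ω₂ ∈ E} with hSdef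
  have hAS : A ⊆ S := by
    intro x hx
    exact ⟨hAsub hx, 0, by simpa using hε.le, by rw [add_zero]; exact hx⟩
  have hSfin : volume S ≠ ⊤ := by
    refine ne_top_of_le_ne_top ?_ (measure_mono (fun x hx => hx.1))
    rw [hIccvol]; exact ENNReal.ofReal_ne_top
  have hLip : LipschitzWith (Real.toNNReal ((M₀ : ℝ) + 1)) F := by
    refine hF.weaken ?_
    rw [show ((M₀ : ℝ) + 1) = ((M₀ + 1 : ℝ≥0) : ℝ) by push_cast; ring, Real.toNNReal_coe]
    exact le_add_of_nonneg_right zero_le_one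
  have hmem : (volume S).toReal / (K - (-K)) ∈
      {u : ℝ | ∃ (ω₁ ω₂ : ℝ × ℝ) (F : ℝ → ℝ) (a b : ℝ),
        dot ω₁ ω₁ = 1 ∧ dot ω₂ ω₂ = 1 ∧ dot ω₁ ω₂ = 0 ∧
        LipschitzWith (Real.toNNReal ((M₀ : ℝ) + 1)) F ∧ 2 * K ≤ b - a ∧
        u = (volume {x : ℝ | x ∈ Set.Icc a b ∧
              ∃ y : ℝ, |y| ≤ ε ∧ x • ω₁ + (F x + y) • ω₂ ∈ E}).toReal / (b - a)} := by
    exact ⟨ω₁, ω₂, F, -K, K, h11, h22, h12, hLip, by ring_nf; rfl, rfl⟩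
  have hbdd : BddAbove {u : ℝ | ∃ (ω₁ ω₂ : ℝ × ℝ) (F : ℝ → ℝ) (a b : ℝ),
        dot ω₁ ω₁ = 1 ∧ dot ω₂ ω₂ = 1 ∧ dot ω₁ ω₂ = 0 ∧
        LipschitzWith (Real.toNNReal ((M₀ : ℝ) + 1)) F ∧ 2 * K ≤ b - a ∧
        u = (volume {x : ℝ | x ∈ Set.Icc a b ∧
              ∃ y : ℝ, |y| ≤ ε ∧ x • ω₁ + (F x + y) • ω₂ ∈ E}).toReal / (b - a)} := by
    refine ⟨1, ?_⟩
    rintro u ⟨w₁, w₂, G, a, b, -, -, -, -, hr, rfl⟩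
    have hba : 0 < b - a := lt_of_lt_of_le (by positivity) hr
    have hvol : (volume {x : ℝ | x ∈ Set.Icc a b ∧
        ∃ y : ℝ, |y| ≤ ε ∧ x • w₁ + (G x + y) • w₂ ∈ E}).toReal ≤ b - a := by
      have hle : volume {x : ℝ | x ∈ Set.Icc a b ∧
          ∃ y : ℝ, |y| ≤ ε ∧ x • w₁ + (G x + y) • w₂ ∈ E} ≤ ENNReal.ofReal (b - a) := by
        rw [← Real.volume_Icc]
        exact measure_mono (fun x hx => hx.1)
      calc _ ≤ (ENNReal.ofReal (b - a)).toReal := ENNReal.toReal_mono ENNReal.ofReal_ne_top hle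
        _ = b - a := ENNReal.toReal_ofReal hba.le
    rw [div_le_one hba]; exact hvol
  have hle : (volume A).toReal / (2 * K) ≤ (volume S).toReal / (K - (-K)) := by
    have : (volume A).toReal ≤ (volume S).toReal :=
      ENNReal.toReal_mono hSfin (measure_mono hAS)
    have h2K : K - (-K) = 2 * K := by ring
    rw [h2K]
    exact div_le_div_of_nonneg_right this (by positivity) |>.trans_eq rfl
  exact hle.trans (le_csSup hbdd hmem)
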